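/- Let β ∈ ℝ and t ∈ ℝ with t ≠ 0. The diagonal point (t, t, t) is a critical point of V_β (i.e. ∇V_β(t,t,t) = 0) if and only if 15t² + 6√2 β t − 6(1−β²) = 0. Consequently, for 0 ≤ β ≤ √5/2, both points (ā, ā, ā) with ā = −(√2/5)(β ± √(5−4β²)) are critical points of V_β, and for β > √5/2 ≥ 0 there is no nonzero diagonal critical point. -/

import Mathlib

/-- The Lyapunov function `V_β` of the amplitude ODE system. -/
noncomputable def V (β a b c : ℝ) : ℝ :=
  -3 * (1 - β ^ 2) * (a ^ 2 + b ^ 2 + c ^ 2) + 6 * Real.sqrt 2 * β * (a * b * c)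
    + 3 * (a ^ 2 * b ^ 2 + b ^ 2 * c ^ 2 + a ^ 2 * c ^ 2)
    + 3 / 4 * (a ^ 4 + b ^ 4 + c ^ 4)

/-- Partial derivative of a function of three real variables in the first variable. -/
noncomputable def pA (f : ℝ → ℝ → ℝ → ℝ) (a b c : ℝ) : ℝ := deriv (fun t => f t b c) a

/-- Partial derivative in the second variable. -/
noncomputable def pB (f : ℝ → ℝ → ℝ → ℝ) (a b c : ℝ) : ℝ := deriv (fun t => f a t c) b

/-- Partial derivative in the third variable. -/
noncomputable def pC (f : ℝ → ℝ → ℝ → ℝ) (a b c : ℝ) : ℝ := deriv (fun t => f a b t) c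

/-- The gradient `∇V_β`. -/
noncomputable def gradV (β a b c : ℝ) : ℝ × ℝ × ℝ :=
  (pA (V β) a b c, pB (V β) a b c, pC (V β) a b c)

lemma pA_V (β a b c : ℝ) :
    pA (V β) a b c = -6 * (1 - β ^ 2) * a + 6 * Real.sqrt 2 * β * (b * c)
      + 6 * a * (b ^ 2 + c ^ 2) + 3 * a ^ 3 := by
  have hfun : (fun t => V β t b c) = fun t : ℝ =>
      (3/4 : ℝ) * t ^ 4 + (-3 * (1 - β ^ 2) + 3 * (b ^ 2 + c ^ 2)) * t ^ 2
        + (6 * Real.sqrt 2 * β * (b * c)) * t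
        + (-3 * (1 - β ^ 2) * (b ^ 2 + c ^ 2) + 3 * (b ^ 2 * c ^ 2)
            + 3 / 4 * (b ^ 4 + c ^ 4)) := by
    funext t; unfold V; ring
  have h := ((((hasDerivAt_pow 4 a).const_mul ((3:ℝ)/4)).add
      ((hasDerivAt_pow 2 a).const_mul (-3 * (1 - β ^ 2) + 3 * (b ^ 2 + c ^ 2)))).add
      ((hasDerivAt_id' a).const_mul (6 * Real.sqrt 2 * β * (b * c)))).add_const
      (-3 * (1 - β ^ 2) * (b ^ 2 + c ^ 2) + 3 * (b ^ 2 * c ^ 2) + 3 / 4 * (b ^ 4 + c ^ 4))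
  simp only [Pi.add_apply] at h
  rw [pA, hfun, h.deriv]
  push_cast
  ring

lemma pB_V (β a b c : ℝ) : pB (V β) a b c = pA (V β) b a c := by
  rw [pB, pA]
  congr 1
  funext t
  unfold V; ring

lemma pC_V (β a b c : ℝ) : pC (V β) a b c = pA (V β) c b a := by
  rw [pC, pA]
  congr 1
  funext t
  unfold V; ring

lemma gradV_diag (β t : ℝ) :
    gradV β t t t = 0 ↔ t * (15 * t ^ 2 + 6 * Real.sqrt 2 * β * t - 6 * (1 - β ^ 2)) = 0 := by
  have h : pA (V β) t t t = t * (15 * t ^ 2 + 6 * Real.sqrt 2 * β * t - 6 * (1 - β ^ 2)) := by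
    rw [pA_V]; ring
  simp only [gradV, pB_V, pC_V, h, Prod.mk_eq_zero]
  tauto

/-- A nonzero diagonal point `(t,t,t)` is a critical point of `V_β` iff
`15 t² + 6√2 β t - 6(1 - β²) = 0`.  Consequently, for `0 ≤ β ≤ √5/2` both
points `(ā,ā,ā)` with `ā = -(√2/5)(β ± √(5 - 4β²))` are critical points, while
for `β > √5/2` there is no nonzero diagonal critical point. -/
theorem diagonal_critical_points (β : ℝ) :
    (∀ t : ℝ, t ≠ 0 →
      (gradV β t t t = 0 ↔
        15 * t ^ 2 + 6 * Real.sqrt 2 * β * t - 6 * (1 - β ^ 2) = 0)) ∧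
    (0 ≤ β → β ≤ Real.sqrt 5 / 2 →
      gradV β (-(Real.sqrt 2 / 5) * (β + Real.sqrt (5 - 4 * β ^ 2)))
        (-(Real.sqrt 2 / 5) * (β + Real.sqrt (5 - 4 * β ^ 2)))
        (-(Real.sqrt 2 / 5) * (β + Real.sqrt (5 - 4 * β ^ 2))) = 0 ∧
      gradV β (-(Real.sqrt 2 / 5) * (β - Real.sqrt (5 - 4 * β ^ 2)))
        (-(Real.sqrt 2 / 5) * (β - Real.sqrt (5 - 4 * β ^ 2)))
        (-(Real.sqrt 2 / 5) * (β - Real.sqrt (5 - 4 * β ^ 2))) = 0) ∧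
    (Real.sqrt 5 / 2 < β → ∀ t : ℝ, t ≠ 0 → gradV β t t t ≠ 0) := by
  have h2 : Real.sqrt 2 ^ 2 = 2 := Real.sq_sqrt (by norm_num)
  refine ⟨fun t ht => ?_, fun hβ0 hβ => ?_, fun hβ t ht hgrad => ?_⟩
  · rw [gradV_diag]
    rw [mul_eq_zero]
    exact ⟨fun h => h.resolve_left ht, Or.inr⟩
  · have hnn : (0:ℝ) ≤ 5 - 4 * β ^ 2 := by
      have h5 : Real.sqrt 5 ^ 2 = 5 := Real.sq_sqrt (by norm_num)
      nlinarith [Real.sqrt_nonneg 5]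
    have hs : Real.sqrt (5 - 4 * β ^ 2) ^ 2 = 5 - 4 * β ^ 2 := Real.sq_sqrt hnn
    set s := Real.sqrt (5 - 4 * β ^ 2) with hsdef
    constructor
    · rw [gradV_diag]
      have : 15 * (-(Real.sqrt 2 / 5) * (β + s)) ^ 2
          + 6 * Real.sqrt 2 * β * (-(Real.sqrt 2 / 5) * (β + s)) - 6 * (1 - β ^ 2) = 0 := by
        linear_combination ((3/5) * (β + s) ^ 2 - (6/5) * β * (β + s)) * h2 + (6/5) * hs
      rw [this, mul_zero]
    · rw [gradV_diag]
      have : 15 * (-(Real.sqrt 2 / 5) * (β - s)) ^ 2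
          + 6 * Real.sqrt 2 * β * (-(Real.sqrt 2 / 5) * (β - s)) - 6 * (1 - β ^ 2) = 0 := by
        linear_combination ((3/5) * (β - s) ^ 2 - (6/5) * β * (β - s)) * h2 + (6/5) * hs
      rw [this, mul_zero]
  · rw [gradV_diag] at hgrad
    have hE := (mul_eq_zero.mp hgrad).resolve_left ht
    have hβ2 : 5 / 4 < β ^ 2 := by
      have h5 : Real.sqrt 5 ^ 2 = 5 := Real.sq_sqrt (by norm_num)
      have h5n : 0 ≤ Real.sqrt 5 / 2 := by positivity
      nlinarith
    nlinarith [sq_nonneg (5 * t + Real.sqrt 2 * β), h2, hβ2]
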